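/- Let H = {w ∈ ℂ : Re w < 0} and let g : H → ℂ be holomorphic with |g(w)| < 1 for all w ∈ H. Suppose g(w+2πi) = T⋆g(w) for all w ∈ H, where T ∈ SU(1,1) is elliptic, i.e. there exist P ∈ SU(1,1) and t ∈ ℝ with P⁻¹TP = Λ_e(t) (the denominator T₂₁g(w)+T₂₂ is automatically nonzero since |g|<1). Then there exist μ ∈ ℝ, A ∈ SU(1,1), and a function h holomorphic on the punctured unit disk Δ* = {0<|z|<1} which extends meromorphically to 0 (i.e. h has at most a pole at z = 0), such that (A⋆g)(w) = e^{μw}·h(e^w) for all w ∈ H. (This is the normal form of a lift of a PSU(1,1)-projective connection with elliptic monodromy, combined with the meromorphicity of h at the puncture.) -/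

import Mathlib

open Complex Matrix Metric

noncomputable section

/-- The matrix `e₃ = diag(1,-1)`. -/
def e3 : Matrix (Fin 2) (Fin 2) ℂ := !![1, 0; 0, -1]

/-- `SU(1,1)`: matrices of determinant 1 with `S e₃ S* = e₃`. -/
def SU11 (S : Matrix (Fin 2) (Fin 2) ℂ) : Prop :=
  S.det = 1 ∧ S * e3 * Sᴴ = e3

/-- `Λ_e(t) = [[e^{it},0],[0,e^{-it}]]`. -/
def Λe (t : ℝ) : Matrix (Fin 2) (Fin 2) ℂ :=
  !![Complex.exp (Complex.I * t), 0; 0, Complex.exp (-(Complex.I * t))]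

/-- The Möbius transformation `A ⋆ z = (A₁₁ z + A₁₂)/(A₂₁ z + A₂₂)`. -/
def mobius (A : Matrix (Fin 2) (Fin 2) ℂ) (z : ℂ) : ℂ :=
  (A 0 0 * z + A 0 1) / (A 1 0 * z + A 1 1)

lemma SU11_entries {S : Matrix (Fin 2) (Fin 2) ℂ} (hS : SU11 S) :
    S 1 0 = starRingEnd ℂ (S 0 1) ∧ S 1 1 = starRingEnd ℂ (S 0 0) := by
  obtain ⟨hdet, hrel⟩ := hS
  rw [Matrix.det_fin_two] at hdet
  have h01 := Matrix.ext_iff.2 hrel 0 1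
  have h11 := Matrix.ext_iff.2 hrel 1 1
  simp [Matrix.mul_apply, Fin.sum_univ_two, e3, Matrix.conjTranspose_apply] at h01 h11
  constructor
  · have hb : S 0 1 = starRingEnd ℂ (S 1 0) := by
      linear_combination (starRingEnd ℂ) (S 1 0) * hdet - S 1 1 * h01 + S 0 1 * h11
    rw [hb, Complex.conj_conj]
  · have ha : S 0 0 = starRingEnd ℂ (S 1 1) := by
      linear_combination (starRingEnd ℂ) (S 1 1) * hdet - S 1 0 * h01 + S 0 0 * h11
    rw [ha, Complex.conj_conj]

lemma SU11_normsq {S : Matrix (Fin 2) (Fin 2) ℂ} (hS : SU11 S) (z : ℂ) :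
    ‖S 1 0 * z + S 1 1‖ ^ 2 = ‖S 0 0 * z + S 0 1‖ ^ 2 + (1 - ‖z‖ ^ 2) := by
  obtain ⟨hc, hd⟩ := SU11_entries hS
  have h00 := Matrix.ext_iff.2 hS.2 0 0
  simp [Matrix.mul_apply, Fin.sum_univ_two, e3, Matrix.conjTranspose_apply] at h00
  have key : (S 1 0 * z + S 1 1) * starRingEnd ℂ (S 1 0 * z + S 1 1)
      = (S 0 0 * z + S 0 1) * starRingEnd ℂ (S 0 0 * z + S 0 1)
        + (1 - z * starRingEnd ℂ z) := by
    rw [hc, hd]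
    simp only [map_add, _root_.map_mul, Complex.conj_conj]
    linear_combination (1 - z * starRingEnd ℂ z) * h00
  rw [Complex.mul_conj, Complex.mul_conj, Complex.mul_conj] at key
  rw [← Complex.normSq_eq_norm_sq, ← Complex.normSq_eq_norm_sq, ← Complex.normSq_eq_norm_sq]
  exact_mod_cast key

lemma SU11_den_ne {S : Matrix (Fin 2) (Fin 2) ℂ} (hS : SU11 S) {z : ℂ} (hz : ‖z‖ < 1) :
    S 1 0 * z + S 1 1 ≠ 0 := by
  intro h
  have := SU11_normsq hS z
  rw [h] at this
  simp only [norm_zero] at this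
  nlinarith [norm_nonneg (S 0 0 * z + S 0 1), norm_nonneg z]

lemma SU11_mobius_lt {S : Matrix (Fin 2) (Fin 2) ℂ} (hS : SU11 S) {z : ℂ} (hz : ‖z‖ < 1) :
    ‖mobius S z‖ < 1 := by
  have hden := SU11_den_ne hS hz
  have hkey := SU11_normsq hS z
  have hdpos : 0 < ‖S 1 0 * z + S 1 1‖ := norm_pos_iff.2 hden
  rw [mobius, norm_div, div_lt_one hdpos]
  nlinarith [norm_nonneg (S 0 0 * z + S 0 1), norm_nonneg z, norm_nonneg (S 1 0 * z + S 1 1)]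

lemma SU11_inv {P : Matrix (Fin 2) (Fin 2) ℂ} (hP : SU11 P) : SU11 P⁻¹ := by
  obtain ⟨hdet, hrel⟩ := hP
  have hu : IsUnit P.det := by rw [hdet]; exact isUnit_one
  have hdet' : P⁻¹.det = 1 := by
    rw [Matrix.det_nonsing_inv, hdet]; simp
  refine ⟨hdet', ?_⟩
  have hPinv : P⁻¹ * P = 1 := Matrix.nonsing_inv_mul P hu
  have hPinv' : Pᴴ * Pᴴ⁻¹ = 1 := Matrix.mul_nonsing_inv Pᴴ (by
    rw [Matrix.det_conjTranspose, hdet]; simp)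
  calc P⁻¹ * e3 * (P⁻¹)ᴴ = P⁻¹ * (P * e3 * Pᴴ) * (P⁻¹)ᴴ := by rw [hrel]
    _ = (P⁻¹ * P) * e3 * (Pᴴ * Pᴴ⁻¹) := by
        rw [Matrix.conjTranspose_nonsing_inv]; noncomm_ring
    _ = e3 := by rw [hPinv, hPinv']; simp

lemma mobius_mul (A B : Matrix (Fin 2) (Fin 2) ℂ) (z : ℂ)
    (hB : B 1 0 * z + B 1 1 ≠ 0) :
    mobius (A * B) z = mobius A (mobius B z) := by
  have e00 : (A * B) 0 0 = A 0 0 * B 0 0 + A 0 1 * B 1 0 := by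
    simp [Matrix.mul_apply, Fin.sum_univ_two]
  have e01 : (A * B) 0 1 = A 0 0 * B 0 1 + A 0 1 * B 1 1 := by
    simp [Matrix.mul_apply, Fin.sum_univ_two]
  have e10 : (A * B) 1 0 = A 1 0 * B 0 0 + A 1 1 * B 1 0 := by
    simp [Matrix.mul_apply, Fin.sum_univ_two]
  have e11 : (A * B) 1 1 = A 1 0 * B 0 1 + A 1 1 * B 1 1 := by
    simp [Matrix.mul_apply, Fin.sum_univ_two]
  rw [mobius, mobius, mobius, e00, e01, e10, e11]
  set D := B 1 0 * z + B 1 1 with hD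
  have h1 : A 0 0 * ((B 0 0 * z + B 0 1) / D) + A 0 1
      = (A 0 0 * (B 0 0 * z + B 0 1) + A 0 1 * D) / D := by
    field_simp
  have h2 : A 1 0 * ((B 0 0 * z + B 0 1) / D) + A 1 1
      = (A 1 0 * (B 0 0 * z + B 0 1) + A 1 1 * D) / D := by
    field_simp
  have h3 : ∀ p q : ℂ, p / D / (q / D) = p / q := by
    intro p q
    rcases eq_or_ne q 0 with hq | hq
    · simp [hq]
    · field_simp
  rw [h1, h2, h3, hD]
  congr 1 <;> ring

lemma Λe00 (t : ℝ) : Λe t 0 0 = Complex.exp (Complex.I * t) := rfl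
lemma Λe01 (t : ℝ) : Λe t 0 1 = 0 := rfl
lemma Λe10 (t : ℝ) : Λe t 1 0 = 0 := rfl
lemma Λe11 (t : ℝ) : Λe t 1 1 = Complex.exp (-(Complex.I * t)) := rfl

lemma mobius_Λe (t : ℝ) (z : ℂ) :
    mobius (Λe t) z = Complex.exp (2 * t * Complex.I) * z := by
  rw [mobius, Λe00, Λe01, Λe10, Λe11]
  rw [zero_mul, zero_add, add_zero, div_eq_iff (Complex.exp_ne_zero _)]
  rw [mul_comm (Complex.exp (2 * t * Complex.I)) z, mul_assoc, ← Complex.exp_add,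
    show 2 * (t : ℂ) * Complex.I + -(Complex.I * t) = Complex.I * t by ring, mul_comm]

/-- Normal form of a lift with elliptic monodromy: if `g` is holomorphic on
the left half-plane with `|g| < 1` and `g(w + 2πi) = T ⋆ g(w)` with
`T ∈ SU(1,1)` elliptic, then there are `μ ∈ ℝ`, `A ∈ SU(1,1)` and a function
`h` holomorphic on the punctured unit disk with at most a pole at `0`, such
that `(A ⋆ g)(w) = e^{μw} h(e^w)`. -/
theorem elliptic_normal_form
    (g : ℂ → ℂ) (T : Matrix (Fin 2) (Fin 2) ℂ)
    (hg : ∀ w : ℂ, w.re < 0 → DifferentiableAt ℂ g w)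
    (hg1 : ∀ w : ℂ, w.re < 0 → ‖g w‖ < 1)
    (hT : SU11 T)
    (hell : ∃ (P : Matrix (Fin 2) (Fin 2) ℂ) (t : ℝ),
      SU11 P ∧ P⁻¹ * T * P = Λe t)
    (hmono : ∀ w : ℂ, w.re < 0 →
      g (w + 2 * Real.pi * Complex.I) = mobius T (g w)) :
    ∃ (μ : ℝ) (A : Matrix (Fin 2) (Fin 2) ℂ) (h : ℂ → ℂ),
      SU11 A ∧
      DifferentiableOn ℂ h {z : ℂ | z ≠ 0 ∧ ‖z‖ < 1} ∧
      (∃ (n : ℕ) (h₀ : ℂ → ℂ), DifferentiableOn ℂ h₀ (ball (0 : ℂ) 1) ∧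
        ∀ z : ℂ, z ≠ 0 → ‖z‖ < 1 → z ^ n * h z = h₀ z) ∧
      ∀ w : ℂ, w.re < 0 →
        mobius A (g w) = Complex.exp ((μ : ℂ) * w) * h (Complex.exp w) := by
  obtain ⟨P, t, hP, hPT⟩ := hell
  have hdetP : IsUnit P.det := by rw [hP.1]; exact isUnit_one
  have hA : SU11 P⁻¹ := SU11_inv hP
  set μ : ℝ := t / Real.pi with hμdef
  have hμ : (μ : ℂ) * (2 * Real.pi * Complex.I) = 2 * t * Complex.I := by
    have hπ : (Real.pi : ℂ) ≠ 0 := Complex.ofReal_ne_zero.2 Real.pi_ne_zero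
    rw [hμdef]
    push_cast
    field_simp
  set c : ℂ := Complex.exp (2 * t * Complex.I) with hcdef
  have hcne : c ≠ 0 := Complex.exp_ne_zero _
  set G : ℂ → ℂ := fun w => mobius P⁻¹ (g w) with hGdef
  have hG1 : ∀ w : ℂ, w.re < 0 → ‖G w‖ < 1 := fun w hw => SU11_mobius_lt hA (hg1 w hw)
  have hGdiff : ∀ w : ℂ, w.re < 0 → DifferentiableAt ℂ G w := by
    intro w hw
    have hden : P⁻¹ 1 0 * g w + P⁻¹ 1 1 ≠ 0 := SU11_den_ne hA (hg1 w hw)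
    have hmob : DifferentiableAt ℂ
        (fun z => (P⁻¹ 0 0 * z + P⁻¹ 0 1) / (P⁻¹ 1 0 * z + P⁻¹ 1 1)) (g w) :=
      DifferentiableAt.div (by fun_prop) (by fun_prop) hden
    exact (hmob.comp w (hg w hw) : _)
  have hPP : P * P⁻¹ = 1 := Matrix.mul_nonsing_inv P hdetP
  have hAT : P⁻¹ * T = Λe t * P⁻¹ := by
    rw [← hPT, Matrix.mul_assoc (P⁻¹ * T) P P⁻¹, hPP, Matrix.mul_one]
  have hGmono : ∀ w : ℂ, w.re < 0 → G (w + 2 * Real.pi * Complex.I) = c * G w := by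
    intro w hw
    calc G (w + 2 * Real.pi * Complex.I) = mobius P⁻¹ (mobius T (g w)) := by
          rw [hGdef]; simp only []; rw [hmono w hw]
      _ = mobius (P⁻¹ * T) (g w) := (mobius_mul P⁻¹ T _ (SU11_den_ne hT (hg1 w hw))).symm
      _ = mobius (Λe t * P⁻¹) (g w) := by rw [hAT]
      _ = mobius (Λe t) (mobius P⁻¹ (g w)) := mobius_mul _ P⁻¹ _ (SU11_den_ne hA (hg1 w hw))
      _ = c * G w := by rw [mobius_Λe]
  have hre : ∀ (k : ℤ) (w : ℂ), (w + (k : ℂ) * (2 * Real.pi * Complex.I)).re = w.re := by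
    intro k w
    simp [Complex.add_re, Complex.mul_re]
  have hGint : ∀ (k : ℤ) (w : ℂ), w.re < 0 →
      G (w + (k : ℂ) * (2 * Real.pi * Complex.I)) = c ^ k * G w := by
    intro k
    induction k using Int.induction_on with
    | zero => intro w hw; simp
    | succ n ih =>
        intro w hw
        have h1 : w + ((((n : ℤ) + 1 : ℤ)) : ℂ) * (2 * Real.pi * Complex.I)
            = (w + ((n : ℤ) : ℂ) * (2 * Real.pi * Complex.I)) + 2 * Real.pi * Complex.I := by
          push_cast; ring
        rw [h1, hGmono _ (by rw [hre]; exact hw), ih w hw, zpow_add_one₀ hcne]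
        ring
    | pred n ih =>
        intro w hw
        have hw' : (w + ((-(n : ℤ) - 1 : ℤ) : ℂ) * (2 * Real.pi * Complex.I)).re < 0 := by
          rw [hre]; exact hw
        have h2 := hGmono (w + ((-(n : ℤ) - 1 : ℤ) : ℂ) * (2 * Real.pi * Complex.I)) hw'
        have h3 : w + ((-(n : ℤ) - 1 : ℤ) : ℂ) * (2 * Real.pi * Complex.I)
              + 2 * Real.pi * Complex.I
            = w + ((-(n : ℤ) : ℤ) : ℂ) * (2 * Real.pi * Complex.I) := by
          push_cast; ring
        rw [h3, ih w hw] at h2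
        apply mul_left_cancel₀ hcne
        rw [← h2, ← mul_assoc, mul_comm c (c ^ (-(n : ℤ) - 1)), ← zpow_add_one₀ hcne,
          show (-(n : ℤ) - 1 + 1) = -(n : ℤ) by ring]
  have hwd : ∀ w₁ w₂ : ℂ, w₁.re < 0 → w₂.re < 0 → Complex.exp w₁ = Complex.exp w₂ →
      Complex.exp (-(μ : ℂ) * w₁) * G w₁ = Complex.exp (-(μ : ℂ) * w₂) * G w₂ := by
    intro w₁ w₂ h1 h2 hew
    obtain ⟨n, hn⟩ := Complex.exp_eq_exp_iff_exists_int.1 hew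
    have hcn : Complex.exp ((μ : ℂ) * ((n : ℂ) * (2 * Real.pi * Complex.I))) = c ^ n := by
      rw [hcdef, ← Complex.exp_int_mul]
      congr 1
      linear_combination (n : ℂ) * hμ
    rw [hn, hGint n w₂ h2]
    have hexp : Complex.exp (-(μ : ℂ) * (w₂ + (n : ℂ) * (2 * Real.pi * Complex.I)))
        = Complex.exp (-(μ : ℂ) * w₂) * (c ^ n)⁻¹ := by
      rw [← hcn, ← Complex.exp_neg, ← Complex.exp_add]
      congr 1
      ring
    rw [hexp, mul_assoc, ← mul_assoc ((c ^ n)⁻¹), inv_mul_cancel₀ (zpow_ne_zero n hcne), one_mul]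
  set h : ℂ → ℂ := fun z => Complex.exp (-(μ : ℂ) * Complex.log z) * G (Complex.log z)
    with hhdef
  have hlogre : ∀ z : ℂ, z ≠ 0 → ‖z‖ < 1 → (Complex.log z).re < 0 := by
    intro z hz hz1
    rw [Complex.log_re]
    exact Real.log_neg (norm_pos_iff.mpr hz) hz1
  have hval : ∀ w : ℂ, w.re < 0 → h (Complex.exp w) = Complex.exp (-(μ : ℂ) * w) * G w := by
    intro w hw
    have hzne : Complex.exp w ≠ 0 := Complex.exp_ne_zero w
    have h1 : Complex.exp (Complex.log (Complex.exp w)) = Complex.exp w := Complex.exp_log hzne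
    have h2 : (Complex.log (Complex.exp w)).re < 0 := by
      rw [Complex.log_re, Complex.norm_exp, Real.log_exp]; exact hw
    exact hwd _ w h2 hw h1
  have hdiffat : ∀ z₀ : ℂ, z₀ ≠ 0 → ‖z₀‖ < 1 → DifferentiableAt ℂ h z₀ := by
    intro z₀ hz0ne hz0lt
    have hz0pos : 0 < ‖z₀‖ := norm_pos_iff.2 hz0ne
    set w₀ := Complex.log z₀ with hw₀
    have hw0re : w₀.re < 0 := hlogre z₀ hz0ne hz0lt
    have hexpw0 : Complex.exp w₀ = z₀ := Complex.exp_log hz0ne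
    set F : ℂ → ℂ := fun z => Complex.exp (-(μ : ℂ) * (w₀ + Complex.log (z / z₀))) *
        G (w₀ + Complex.log (z / z₀)) with hFdef
    have hL : DifferentiableAt ℂ (fun z => w₀ + Complex.log (z / z₀)) z₀ := by
      have hd1 : DifferentiableAt ℂ (fun z : ℂ => z / z₀) z₀ := by fun_prop
      have hd2 : DifferentiableAt ℂ Complex.log ((fun z : ℂ => z / z₀) z₀) := by
        simp only [div_self hz0ne]
        exact Complex.differentiableAt_log (by simp [Complex.slitPlane])
      have hd3 := DifferentiableAt.comp (g := Complex.log) (f := fun z : ℂ => z / z₀) z₀ hd2 hd1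
      exact hd3.const_add w₀
    have hLval : w₀ + Complex.log (z₀ / z₀) = w₀ := by
      rw [div_self hz0ne, Complex.log_one, add_zero]
    have hFdiff : DifferentiableAt ℂ F z₀ := by
      have hGat : DifferentiableAt ℂ G (w₀ + Complex.log (z₀ / z₀)) := by
        rw [hLval]; exact hGdiff w₀ hw0re
      have hexpd : DifferentiableAt ℂ
          (fun z => Complex.exp (-(μ : ℂ) * (w₀ + Complex.log (z / z₀)))) z₀ :=
        (hL.const_mul _).cexp
      exact hexpd.mul (DifferentiableAt.comp (g := G) z₀ hGat hL)
    have hev : h =ᶠ[nhds z₀] F := by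
      have hεpos : 0 < min (1 - ‖z₀‖) (‖z₀‖ / 2) := by
        apply lt_min <;> linarith
      filter_upwards [Metric.ball_mem_nhds z₀ hεpos] with z hz
      rw [Metric.mem_ball, Complex.dist_eq] at hz
      have hz1 : ‖z - z₀‖ < 1 - ‖z₀‖ := lt_of_lt_of_le hz (min_le_left _ _)
      have hz2 : ‖z - z₀‖ < ‖z₀‖ / 2 := lt_of_lt_of_le hz (min_le_right _ _)
      have hzlt : ‖z‖ < 1 := by
        have := norm_add_le z₀ (z - z₀)
        simp only [add_sub_cancel] at this
        linarith
      have hzne : z ≠ 0 := by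
        intro h0
        rw [h0, zero_sub, norm_neg] at hz2
        linarith
      have hq : z / z₀ - 1 = (z - z₀) / z₀ := by field_simp
      have hqn : ‖z / z₀ - 1‖ < 1 / 2 := by
        rw [hq, norm_div, div_lt_iff₀ hz0pos]
        linarith
      have hslit : z / z₀ ∈ Complex.slitPlane := by
        left
        have hre1 : -‖z / z₀ - 1‖ ≤ (z / z₀ - 1).re :=
          neg_le_of_abs_le (Complex.abs_re_le_norm _)
        have habs : ‖z / z₀ - 1‖ < 1 / 2 := hqn
        have hre0 : (z / z₀).re = 1 + (z / z₀ - 1).re := by simp [Complex.sub_re]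
        rw [hre0]
        linarith
      have hre2 : (w₀ + Complex.log (z / z₀)).re < 0 := by
        rw [Complex.add_re, hw₀, Complex.log_re, Complex.log_re, norm_div,
          Real.log_div (norm_ne_zero_iff.mpr hzne) (norm_ne_zero_iff.mpr hz0ne)]
        have h5 : Real.log ‖z‖ < 0 := by
          apply Real.log_neg (norm_pos_iff.mpr hzne)
          exact hzlt
        linarith
      have hexp2 : Complex.exp (w₀ + Complex.log (z / z₀)) = z := by
        rw [Complex.exp_add, hexpw0, Complex.exp_log (div_ne_zero hzne hz0ne)]
        field_simp
      have := hwd (Complex.log z) (w₀ + Complex.log (z / z₀)) (hlogre z hzne hzlt) hre2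
        (by rw [Complex.exp_log hzne, hexp2])
      exact this
    exact hFdiff.congr_of_eventuallyEq hev
  have hdiff : DifferentiableOn ℂ h {z : ℂ | z ≠ 0 ∧ ‖z‖ < 1} := by
    intro z hz
    exact (hdiffat z hz.1 hz.2).differentiableWithinAt
  have hbound : ∀ z : ℂ, z ≠ 0 → ‖z‖ < 1 → ‖h z‖ ≤ ‖z‖ ^ (-μ) := by
    intro z hz hz1
    have hzpos : 0 < ‖z‖ := norm_pos_iff.2 hz
    rw [hhdef]
    simp only []
    rw [norm_mul]
    have h1 : ‖Complex.exp (-(μ : ℂ) * Complex.log z)‖ = ‖z‖ ^ (-μ) := by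
      rw [Complex.norm_exp]
      have h2 : (-(μ : ℂ) * Complex.log z).re = -μ * Real.log ‖z‖ := by
        simp [Complex.mul_re, Complex.log_re]
      rw [h2, Real.rpow_def_of_pos hzpos, mul_comm]
    rw [h1]
    have h3 := hG1 _ (hlogre z hz hz1)
    exact mul_le_of_le_one_right (Real.rpow_nonneg (norm_nonneg z) _) h3.le
  set n : ℕ := ⌈μ⌉₊ with hndef
  set f : ℂ → ℂ := fun z => z ^ n * h z with hfdef
  have hfb : ∀ z : ℂ, z ≠ 0 → ‖z‖ < 1 → ‖f z‖ ≤ 1 := by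
    intro z hz hz1
    have hzpos : 0 < ‖z‖ := norm_pos_iff.2 hz
    rw [hfdef]
    simp only []
    rw [norm_mul, norm_pow]
    calc ‖z‖ ^ n * ‖h z‖ ≤ ‖z‖ ^ n * ‖z‖ ^ (-μ) := by
          exact mul_le_mul_of_nonneg_left (hbound z hz hz1) (pow_nonneg (norm_nonneg z) n)
      _ = ‖z‖ ^ ((n : ℝ) + (-μ)) := by
          rw [← Real.rpow_natCast ‖z‖ n, ← Real.rpow_add hzpos]
      _ ≤ 1 := by
          apply Real.rpow_le_one (norm_nonneg z) hz1.le
          have := Nat.le_ceil μ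
          rw [← hndef] at this
          linarith
  have hsets : ball (0 : ℂ) 1 \ {0} = {z : ℂ | z ≠ 0 ∧ ‖z‖ < 1} := by
    ext z
    simp [Metric.mem_ball, Complex.dist_eq, and_comm, sub_zero]
  have hfd : DifferentiableOn ℂ f (ball (0 : ℂ) 1 \ {0}) := by
    rw [hsets]
    exact (differentiable_pow n).differentiableOn.mul hdiff
  have hbdd : BddAbove (norm ∘ f '' (ball (0 : ℂ) 1 \ {0})) := by
    refine ⟨1, ?_⟩
    rintro y ⟨z, hzmem, rfl⟩
    rw [hsets] at hzmem
    exact hfb z hzmem.1 hzmem.2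
  have hrem := Complex.differentiableOn_update_limUnder_of_bddAbove
    (Metric.ball_mem_nhds (0 : ℂ) one_pos) hfd hbdd
  refine ⟨μ, P⁻¹, h, hA, hdiff, ⟨n, _, hrem, ?_⟩, ?_⟩
  · intro z hz hz1
    rw [Function.update_of_ne hz]
  · intro w hw
    have : mobius P⁻¹ (g w) = G w := rfl
    rw [this, hval w hw, ← mul_assoc, ← Complex.exp_add,
      show (μ : ℂ) * w + -(μ : ℂ) * w = 0 by ring, Complex.exp_zero, one_mul]
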